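/- (Proposition 2.) Let Z_1,…,Z_N be independent square-integrable real random variables with means μ_i = E[Z_i] and variances v_i = Var(Z_i). Among all partitions of {1,…,N} into H strata D_1,…,D_H each of size N_h ≥ 2, a partition minimizes the expected within-strata weighted variance E[Σ_{h=1}^H (N_h/N) S²_{Z_h}] (equivalently, the expected design variance of the Horvitz–Thompson estimator under stratified simple random sampling with proportional allocation, which equals ((1−f)/n) E[Σ_h (N_h/N) S²_{Z_h}]) if and only if it minimizes Σ_{h=1}^H (N_h/N) S²_{μ,h}, the corresponding weighted within-strata variance of the means μ_1,…,μ_N. -/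

import Mathlib

open MeasureTheory ProbabilityTheory Finset
open scoped Classical

private lemma sum_sq_dev {ι : Type*} (s : Finset ι) (x : ι → ℝ) (hc : (s.card : ℝ) ≠ 0) :
    ∑ i ∈ s, (x i - (1 / (s.card : ℝ)) * ∑ j ∈ s, x j) ^ 2
      = ∑ i ∈ s, x i ^ 2 - (1 / (s.card : ℝ)) * (∑ j ∈ s, x j) ^ 2 := by
  have expand : ∀ i ∈ s, (x i - (1/(s.card:ℝ)) * ∑ j ∈ s, x j)^2
      = x i^2 - (2 * (1/(s.card:ℝ)) * ∑ j ∈ s, x j) * x i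
        + (1/(s.card:ℝ))^2 * (∑ j ∈ s, x j)^2 := fun i _ => by ring
  rw [Finset.sum_congr rfl expand, Finset.sum_add_distrib, Finset.sum_sub_distrib,
    ← Finset.mul_sum, Finset.sum_const, nsmul_eq_mul]
  field_simp
  ring

private lemma stratum_integral {Ω : Type*} [MeasurableSpace Ω] (P : Measure Ω)
    [IsProbabilityMeasure P] {N : ℕ} (Z : Fin N → Ω → ℝ)
    (hL2 : ∀ i, MemLp (Z i) 2 P)
    (hindep : iIndepFun Z P)
    (D : Finset (Fin N)) (hD : (D.card : ℝ) ≠ 0) :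
    ∫ ω, ∑ i ∈ D, (Z i ω - (1/(D.card:ℝ)) * ∑ j ∈ D, Z j ω)^2 ∂P
      = (∑ i ∈ D, ((∫ ω, Z i ω ∂P) - (1/(D.card:ℝ)) * ∑ j ∈ D, ∫ ω, Z j ω ∂P)^2)
        + (((D.card:ℝ) - 1)/(D.card:ℝ)) * ∑ i ∈ D, variance (Z i) P := by
  have hSm : MemLp (∑ j ∈ D, Z j) 2 P := memLp_finset_sum' D fun j _ => hL2 j
  have hSm' : MemLp (fun ω => ∑ j ∈ D, Z j ω) 2 P :=
    memLp_finset_sum D fun j _ => hL2 j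
  have hZsq : ∀ i, Integrable (fun ω => Z i ω ^ 2) P := fun i => (hL2 i).integrable_sq
  have hVsum : variance (∑ j ∈ D, Z j) P = ∑ j ∈ D, variance (Z j) P :=
    IndepFun.variance_sum (fun i _ => hL2 i)
      (fun i _ j _ hij => hindep.indepFun hij)
  have hS2 : ∫ ω, (∑ j ∈ D, Z j ω)^2 ∂P
      = ∑ j ∈ D, variance (Z j) P + (∑ j ∈ D, ∫ ω, Z j ω ∂P)^2 := by
    have h1 := variance_eq_sub hSm
    have h2 : ∫ ω, (∑ j ∈ D, Z j) ω ∂P = ∑ j ∈ D, ∫ ω, Z j ω ∂P := by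
      simp only [Finset.sum_apply]
      exact integral_finset_sum D fun i _ => (hL2 i).integrable one_le_two
    simp only [Pi.pow_apply, Finset.sum_apply] at h1 h2
    rw [hVsum, h2] at h1
    linarith
  have hZi : ∀ i, ∫ ω, Z i ω ^ 2 ∂P = variance (Z i) P + (∫ ω, Z i ω ∂P)^2 := by
    intro i
    have h1 := variance_eq_sub (hL2 i)
    simp only [Pi.pow_apply] at h1
    linarith
  have key : (∫ ω, ∑ i ∈ D, (Z i ω - (1/(D.card:ℝ)) * ∑ j ∈ D, Z j ω)^2 ∂P)
      = (∑ i ∈ D, ∫ ω, Z i ω ^2 ∂P) - (1/(D.card:ℝ)) * ∫ ω, (∑ j ∈ D, Z j ω)^2 ∂P := by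
    have heq : ∀ ω, ∑ i ∈ D, (Z i ω - (1/(D.card:ℝ)) * ∑ j ∈ D, Z j ω)^2
        = ∑ i ∈ D, Z i ω ^2 - (1/(D.card:ℝ)) * (∑ j ∈ D, Z j ω)^2 :=
      fun ω => sum_sq_dev D (fun i => Z i ω) hD
    rw [integral_congr_ae (Filter.Eventually.of_forall heq),
      integral_sub (integrable_finset_sum D fun i _ => hZsq i)
        (hSm'.integrable_sq.const_mul _),
      integral_finset_sum D (fun i _ => hZsq i), integral_const_mul]
  rw [key, hS2]
  rw [sum_sq_dev D (fun i => ∫ ω, Z i ω ∂P) hD]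
  have : ∑ i ∈ D, ∫ ω, Z i ω ^2 ∂P
      = ∑ i ∈ D, variance (Z i) P + ∑ i ∈ D, (∫ ω, Z i ω ∂P)^2 := by
    rw [← Finset.sum_add_distrib]; exact Finset.sum_congr rfl fun i _ => hZi i
  rw [this]
  field_simp
  ring

/-- Proposition 2: Among all partitions of `{1,…,N}` into `H` strata of
size ≥ 2 (fibers of `st : Fin N → Fin H`), a partition minimizes the expected
within-strata weighted variance `E[∑_h (N_h/N) S²_{Z_h}]` (equivalently, the expected
design variance of the Horvitz–Thompson estimator under stratified simple random
sampling with proportional allocation, which is `((1-f)/n)` times it) if and only if it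
minimizes `∑_h (N_h/N) S²_{μ,h}`, the weighted within-strata variance of the means. -/
theorem kmeans_on_means_optimal_stratification
    {Ω : Type*} [MeasurableSpace Ω] (P : Measure Ω) [IsProbabilityMeasure P]
    (N H : ℕ)
    (Z : Fin N → Ω → ℝ)
    (hmeas : ∀ i, Measurable (Z i))
    (hL2 : ∀ i, MemLp (Z i) 2 P)
    (hindep : iIndepFun Z P) :
    (let Dh : (Fin N → Fin H) → Fin H → Finset (Fin N) :=
       fun st h => univ.filter (fun i => st i = h)
     let Nh : (Fin N → Fin H) → Fin H → ℕ := fun st h => (Dh st h).card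
     let Good : (Fin N → Fin H) → Prop := fun st => ∀ h, 2 ≤ Nh st h
     let μZ : Fin N → ℝ := fun i => ∫ ω, Z i ω ∂P
     -- expected within-strata weighted sample variance of the Z's
     let EW : (Fin N → Fin H) → ℝ := fun st =>
       ∫ ω, (∑ h, ((Nh st h : ℝ) / N) *
         ((1 / ((Nh st h : ℝ) - 1)) *
           ∑ i ∈ Dh st h, (Z i ω - (1 / (Nh st h : ℝ)) * ∑ j ∈ Dh st h, Z j ω) ^ 2)) ∂P
     -- within-strata weighted variance of the means
     let B : (Fin N → Fin H) → ℝ := fun st =>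
       ∑ h, ((Nh st h : ℝ) / N) *
         ((1 / ((Nh st h : ℝ) - 1)) *
           ∑ i ∈ Dh st h, (μZ i - (1 / (Nh st h : ℝ)) * ∑ j ∈ Dh st h, μZ j) ^ 2)
     ∀ st, Good st →
       ((∀ st', Good st' → EW st ≤ EW st') ↔ (∀ st', Good st' → B st ≤ B st'))) := by
  intro Dh Nh Good μZ EW B
  have key : ∀ st, Good st → EW st = B st + (1/(N:ℝ)) * ∑ i, variance (Z i) P := by
    intro st hst
    have hc0 : ∀ h, ((Nh st h : ℝ)) ≠ 0 := by
      intro h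
      have h2 := hst h
      have : (2:ℝ) ≤ (Nh st h : ℝ) := by exact_mod_cast h2
      linarith
    have hc1 : ∀ h, ((Nh st h : ℝ) - 1) ≠ 0 := by
      intro h
      have h2 := hst h
      have : (2:ℝ) ≤ (Nh st h : ℝ) := by exact_mod_cast h2
      intro hcontra; linarith
    have hint : ∀ h : Fin H, Integrable (fun ω => ((Nh st h:ℝ)/N) *
        ((1/((Nh st h:ℝ)-1)) *
          ∑ i ∈ Dh st h, (Z i ω - (1/(Nh st h:ℝ)) * ∑ j ∈ Dh st h, Z j ω)^2)) P := by
      intro h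
      apply Integrable.const_mul
      apply Integrable.const_mul
      apply integrable_finset_sum
      intro i _
      exact ((hL2 i).sub ((memLp_finset_sum (Dh st h) fun j _ => hL2 j).const_mul
        (1/(Nh st h:ℝ)))).integrable_sq
    have hEW : EW st = ∑ h, ((Nh st h:ℝ)/N) * ((1/((Nh st h:ℝ)-1)) *
        ((∑ i ∈ Dh st h, (μZ i - (1/(Nh st h:ℝ)) * ∑ j ∈ Dh st h, μZ j)^2)
          + (((Nh st h:ℝ) - 1)/(Nh st h:ℝ)) * ∑ i ∈ Dh st h, variance (Z i) P)) := by
      show (∫ ω, (∑ h, ((Nh st h : ℝ) / N) *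
         ((1 / ((Nh st h : ℝ) - 1)) *
           ∑ i ∈ Dh st h, (Z i ω - (1 / (Nh st h : ℝ)) * ∑ j ∈ Dh st h, Z j ω) ^ 2)) ∂P) = _
      rw [integral_finset_sum univ (fun h _ => hint h)]
      refine Finset.sum_congr rfl fun h _ => ?_
      rw [integral_const_mul, integral_const_mul,
        stratum_integral P Z hL2 hindep (Dh st h) (hc0 h)]
    rw [hEW]
    have split : ∀ h : Fin H, ((Nh st h:ℝ)/N) * ((1/((Nh st h:ℝ)-1)) *
        ((∑ i ∈ Dh st h, (μZ i - (1/(Nh st h:ℝ)) * ∑ j ∈ Dh st h, μZ j)^2)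
          + (((Nh st h:ℝ) - 1)/(Nh st h:ℝ)) * ∑ i ∈ Dh st h, variance (Z i) P))
        = ((Nh st h:ℝ)/N) * ((1/((Nh st h:ℝ)-1)) *
            ∑ i ∈ Dh st h, (μZ i - (1/(Nh st h:ℝ)) * ∑ j ∈ Dh st h, μZ j)^2)
          + (1/(N:ℝ)) * ∑ i ∈ Dh st h, variance (Z i) P := by
      intro h
      have hn := hc0 h
      have hn1 := hc1 h
      generalize (∑ i ∈ Dh st h, (μZ i - (1/(Nh st h:ℝ)) * ∑ j ∈ Dh st h, μZ j)^2) = M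
      generalize (∑ i ∈ Dh st h, variance (Z i) P) = V
      by_cases hN : (N:ℝ) = 0
      · simp [hN]
      · field_simp
    rw [Finset.sum_congr rfl fun h _ => split h, Finset.sum_add_distrib, ← Finset.mul_sum]
    congr 1
    congr 1
    exact Finset.sum_fiberwise univ (fun i => st i) (fun i => variance (Z i) P)
  intro st hst
  constructor
  · intro hmin st' hst'
    have h1 := hmin st' hst'
    rw [key st hst, key st' hst'] at h1
    linarith
  · intro hmin st' hst'
    have h1 := hmin st' hst'
    rw [key st hst, key st' hst']
    linarith
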